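/- There do not exist four real polynomials P₁, P₂, P₃, P₄ ∈ ℝ[x] and a real number ε > 0 such that P₁(x) < P₂(x) < P₃(x) < P₄(x) for all x with −ε < x < 0, and P₂(x) < P₄(x) < P₁(x) < P₃(x) for all x with 0 < x < ε. -/
import Mathlib

open Polynomial

private lemma rm_neg (p : ℝ[X]) : (-p).rootMultiplicity 0 = p.rootMultiplicity 0 := by
  rw [rootMultiplicity_eq_natTrailingDegree', rootMultiplicity_eq_natTrailingDegree',
    natTrailingDegree_neg]

private lemma rm_sub_eq (p q : ℝ[X]) (hq : q ≠ 0)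
    (h : q.rootMultiplicity 0 < p.rootMultiplicity 0) :
    (p - q).rootMultiplicity 0 = q.rootMultiplicity 0 := by
  have hpq : p - q ≠ 0 := by
    intro h0
    have : p = q := by linear_combination h0
    rw [this] at h; omega
  have h1 : min (p.rootMultiplicity 0) ((-q).rootMultiplicity 0)
      ≤ (p + -q).rootMultiplicity 0 :=
    rootMultiplicity_add 0 (by rwa [← sub_eq_add_neg])
  rw [rm_neg, ← sub_eq_add_neg] at h1
  have h2 : min (p.rootMultiplicity 0) ((-(p - q)).rootMultiplicity 0)
      ≤ (p + -(p - q)).rootMultiplicity 0 := by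
    apply rootMultiplicity_add 0
    simpa using hq
  rw [rm_neg] at h2
  have h3 : p + -(p - q) = q := by ring
  rw [h3] at h2
  omega

private lemma sign_factor (p : ℝ[X]) (hp : p ≠ 0) :
    ∃ δ > (0:ℝ), ∃ q : ℝ[X], q.eval 0 ≠ 0 ∧
      (∀ x : ℝ, |x| < δ → 0 < q.eval x * q.eval 0) ∧
      (∀ x : ℝ, p.eval x = x ^ (p.rootMultiplicity 0) * q.eval x) := by
  obtain ⟨q, hq, hnd⟩ := p.exists_eq_pow_rootMultiplicity_mul_and_not_dvd hp 0
  rw [map_zero, sub_zero] at hq hnd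
  have hq0 : q.eval 0 ≠ 0 := by
    intro h
    exact hnd (X_dvd_iff.2 (by rwa [← coeff_zero_eq_eval_zero] at h))
  have hcont : Continuous fun x : ℝ => q.eval x * q.eval 0 :=
    (Polynomial.continuous q).mul continuous_const
  have h0 : (0:ℝ) < q.eval 0 * q.eval 0 := mul_self_pos.2 hq0
  have hev : ∀ᶠ x in nhds (0:ℝ), 0 < q.eval x * q.eval 0 :=
    (hcont.continuousAt (x := 0)).eventually_mem (Ioi_mem_nhds h0)
  rw [Metric.eventually_nhds_iff] at hev
  obtain ⟨δ, hδ, hball⟩ := hev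
  refine ⟨δ, hδ, q, hq0, fun x hx => hball (by simpa [Real.dist_eq] using hx), fun x => ?_⟩
  conv_lhs => rw [hq]
  simp

private lemma rm_even (p : ℝ[X]) (ε : ℝ) (hε : 0 < ε)
    (hl : ∀ x : ℝ, -ε < x → x < 0 → 0 < p.eval x)
    (hr : ∀ x : ℝ, 0 < x → x < ε → 0 < p.eval x) :
    Even (p.rootMultiplicity 0) := by
  have hp : p ≠ 0 := by
    intro h
    have := hr (ε/2) (by linarith) (by linarith)
    simp [h] at this
  obtain ⟨δ, hδ, q, hq0, hsign, hfac⟩ := sign_factor p hp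
  have hmin : 0 < min δ ε := lt_min hδ hε
  set t := min δ ε / 2 with ht
  have htpos : 0 < t := by positivity
  have htδ : t < δ := by have := min_le_left δ ε; simp only [ht]; linarith
  have htε : t < ε := by have := min_le_right δ ε; simp only [ht]; linarith
  set m := p.rootMultiplicity 0 with hm
  -- sign on the right
  have hqt : 0 < q.eval t * q.eval 0 := hsign t (by rw [abs_of_pos htpos]; exact htδ)
  have hqnt : 0 < q.eval (-t) * q.eval 0 := hsign (-t) (by rw [abs_neg, abs_of_pos htpos]; exact htδ)
  have hrt : 0 < p.eval t := hr t htpos htε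
  have hlt : 0 < p.eval (-t) := hl (-t) (by linarith) (by linarith)
  rw [hfac t] at hrt
  rw [hfac (-t)] at hlt
  -- from right: eval t q > 0 hence eval 0 q > 0 hence eval (-t) q > 0
  have hpow : 0 < t ^ m := pow_pos htpos m
  have hq_t : 0 < q.eval t := by nlinarith
  have hq_0 : 0 < q.eval 0 := by nlinarith
  have hq_nt : 0 < q.eval (-t) := by nlinarith
  rcases Nat.even_or_odd m with he | ho
  · exact he
  · exfalso
    have : (-t) ^ m = -(t ^ m) := ho.neg_pow t
    rw [this] at hlt
    nlinarith

private lemma rm_odd (p : ℝ[X]) (ε : ℝ) (hε : 0 < ε)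
    (hl : ∀ x : ℝ, -ε < x → x < 0 → 0 < p.eval x)
    (hr : ∀ x : ℝ, 0 < x → x < ε → p.eval x < 0) :
    Odd (p.rootMultiplicity 0) := by
  have hp : p ≠ 0 := by
    intro h
    have := hr (ε/2) (by linarith) (by linarith)
    simp [h] at this
  obtain ⟨δ, hδ, q, hq0, hsign, hfac⟩ := sign_factor p hp
  have hmin : 0 < min δ ε := lt_min hδ hε
  set t := min δ ε / 2 with ht
  have htpos : 0 < t := by positivity
  have htδ : t < δ := by have := min_le_left δ ε; simp only [ht]; linarith
  have htε : t < ε := by have := min_le_right δ ε; simp only [ht]; linarith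
  set m := p.rootMultiplicity 0 with hm
  have hqt : 0 < q.eval t * q.eval 0 := hsign t (by rw [abs_of_pos htpos]; exact htδ)
  have hqnt : 0 < q.eval (-t) * q.eval 0 := hsign (-t) (by rw [abs_neg, abs_of_pos htpos]; exact htδ)
  have hrt : p.eval t < 0 := hr t htpos htε
  have hlt : 0 < p.eval (-t) := hl (-t) (by linarith) (by linarith)
  rw [hfac t] at hrt
  rw [hfac (-t)] at hlt
  have hpow : 0 < t ^ m := pow_pos htpos m
  have hq_t : q.eval t < 0 := by nlinarith
  have hq_0 : q.eval 0 < 0 := by nlinarith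
  have hq_nt : q.eval (-t) < 0 := by nlinarith
  rcases Nat.even_or_odd m with he | ho
  · exfalso
    have : (-t) ^ m = t ^ m := he.neg_pow t
    rw [this] at hlt
    nlinarith
  · exact ho

theorem no_kontsevich_interchange :
    ¬ ∃ (P₁ P₂ P₃ P₄ : Polynomial ℝ) (ε : ℝ), 0 < ε ∧
      (∀ x : ℝ, -ε < x → x < 0 →
        P₁.eval x < P₂.eval x ∧ P₂.eval x < P₃.eval x ∧ P₃.eval x < P₄.eval x) ∧
      (∀ x : ℝ, 0 < x → x < ε →
        P₂.eval x < P₄.eval x ∧ P₄.eval x < P₁.eval x ∧ P₁.eval x < P₃.eval x) := by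
  rintro ⟨P₁, P₂, P₃, P₄, ε, hε, hl, hr⟩
  set Q₂ := P₂ - P₁ with hQ2
  set Q₃ := P₃ - P₁ with hQ3
  set Q₄ := P₄ - P₁ with hQ4
  -- multiplicities parities
  have m2 : Odd (Q₂.rootMultiplicity 0) := by
    apply rm_odd _ ε hε
    · intro x h1 h2
      obtain ⟨a, b, c⟩ := hl x h1 h2
      simp only [hQ2, eval_sub]; linarith
    · intro x h1 h2
      obtain ⟨a, b, c⟩ := hr x h1 h2
      simp only [hQ2, eval_sub]; linarith
  have m3 : Even (Q₃.rootMultiplicity 0) := by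
    apply rm_even _ ε hε
    · intro x h1 h2
      obtain ⟨a, b, c⟩ := hl x h1 h2
      simp only [hQ3, eval_sub]; linarith
    · intro x h1 h2
      obtain ⟨a, b, c⟩ := hr x h1 h2
      simp only [hQ3, eval_sub]; linarith
  have m4 : Odd (Q₄.rootMultiplicity 0) := by
    apply rm_odd _ ε hε
    · intro x h1 h2
      obtain ⟨a, b, c⟩ := hl x h1 h2
      simp only [hQ4, eval_sub]; linarith
    · intro x h1 h2
      obtain ⟨a, b, c⟩ := hr x h1 h2
      simp only [hQ4, eval_sub]; linarith
  have m32 : Even ((Q₃ - Q₂).rootMultiplicity 0) := by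
    apply rm_even _ ε hε
    · intro x h1 h2
      obtain ⟨a, b, c⟩ := hl x h1 h2
      simp only [hQ3, hQ2, eval_sub]; linarith
    · intro x h1 h2
      obtain ⟨a, b, c⟩ := hr x h1 h2
      simp only [hQ3, hQ2, eval_sub]; linarith
  have m42 : Even ((Q₄ - Q₂).rootMultiplicity 0) := by
    apply rm_even _ ε hε
    · intro x h1 h2
      obtain ⟨a, b, c⟩ := hl x h1 h2
      simp only [hQ4, hQ2, eval_sub]; linarith
    · intro x h1 h2
      obtain ⟨a, b, c⟩ := hr x h1 h2
      simp only [hQ4, hQ2, eval_sub]; linarith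
  have m43 : Odd ((Q₄ - Q₃).rootMultiplicity 0) := by
    apply rm_odd _ ε hε
    · intro x h1 h2
      obtain ⟨a, b, c⟩ := hl x h1 h2
      simp only [hQ4, hQ3, eval_sub]; linarith
    · intro x h1 h2
      obtain ⟨a, b, c⟩ := hr x h1 h2
      simp only [hQ4, hQ3, eval_sub]; linarith
  -- nonzeroness
  have hQ2ne : Q₂ ≠ 0 := by
    intro h
    obtain ⟨a, b, c⟩ := hr (ε/2) (by linarith) (by linarith)
    have := congrArg (Polynomial.eval (ε/2)) h
    simp only [hQ2, eval_sub, eval_zero] at this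
    linarith
  have hQ3ne : Q₃ ≠ 0 := by
    intro h
    obtain ⟨a, b, c⟩ := hr (ε/2) (by linarith) (by linarith)
    have := congrArg (Polynomial.eval (ε/2)) h
    simp only [hQ3, eval_sub, eval_zero] at this
    linarith
  have hQ4ne : Q₄ ≠ 0 := by
    intro h
    obtain ⟨a, b, c⟩ := hr (ε/2) (by linarith) (by linarith)
    have := congrArg (Polynomial.eval (ε/2)) h
    simp only [hQ4, eval_sub, eval_zero] at this
    linarith
  -- order comparisons
  have h43 : Q₄.rootMultiplicity 0 < Q₃.rootMultiplicity 0 := by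
    rcases lt_trichotomy (Q₄.rootMultiplicity 0) (Q₃.rootMultiplicity 0) with h | h | h
    · exact h
    · exfalso; rw [h] at m4; exact (Nat.not_odd_iff_even.2 m3) m4
    · exfalso
      have := rm_sub_eq Q₄ Q₃ hQ3ne h
      rw [this] at m43
      exact (Nat.not_odd_iff_even.2 m3) m43
  have h32 : Q₃.rootMultiplicity 0 < Q₂.rootMultiplicity 0 := by
    rcases lt_trichotomy (Q₃.rootMultiplicity 0) (Q₂.rootMultiplicity 0) with h | h | h
    · exact h
    · exfalso; rw [h] at m3; exact (Nat.not_odd_iff_even.2 m3) m2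
    · exfalso
      have := rm_sub_eq Q₃ Q₂ hQ2ne h
      rw [this] at m32
      exact (Nat.not_odd_iff_even.2 m32) m2
  -- final contradiction
  have h42 : (Q₂ - Q₄).rootMultiplicity 0 = Q₄.rootMultiplicity 0 :=
    rm_sub_eq Q₂ Q₄ hQ4ne (by omega)
  have hneg : -(Q₂ - Q₄) = Q₄ - Q₂ := by ring
  rw [← hneg, rm_neg, h42] at m42
  exact (Nat.not_odd_iff_even.2 m42) m4
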